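/- Let j be an integer with j > 1 and let p = 2j/(2j-1). Let f ∈ L^p and let H ∈ L^{2j} satisfy: Ĥ(n) is real with Ĥ(n) ≥ 0 for all n ∈ ℤ; the function J = (conj H)^{j-1} H^j is a majorant of f; and Ĥ(n) = 0 at every integer n where Ĵ(n) > |f̂(n)|. Then Ĥ(n) = 0 at every integer n where f̂(n) = 0. -/

import Mathlib

open MeasureTheory Complex
open scoped Real ENNReal

noncomputable section

instance : Fact (0 < 2 * Real.pi) := ⟨by positivity⟩

abbrev Circle2Pi := AddCircle (2 * Real.pi)

abbrev circleMeasure : Measure Circle2Pi := AddCircle.haarAddCircle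

/-- `J` is a majorant of `f`. -/
def IsMajorant (J f : Circle2Pi → ℂ) : Prop :=
  ∀ n : ℤ, (fourierCoeff J n).im = 0 ∧ ‖fourierCoeff f n‖ ≤ (fourierCoeff J n).re

open ComplexConjugate

lemma fourierCoeff_congr_ae' {f g : Circle2Pi → ℂ} (h : f =ᵐ[circleMeasure] g) (n : ℤ) :
    fourierCoeff f n = fourierCoeff g n := by
  unfold fourierCoeff
  exact integral_congr_ae (by filter_upwards [h] with t ht; rw [ht])

lemma memLp_fourier_mul {B : Circle2Pi → ℂ} {q : ℝ≥0∞} (hB : MemLp B q circleMeasure) (n : ℤ) :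
    MemLp (fun θ => fourier n θ * B θ) q circleMeasure := by
  have hφ : MemLp (fun θ : Circle2Pi => (fourier n θ : ℂ)) ∞ circleMeasure := by
    apply memLp_top_of_bound ((map_continuous (fourier n)).aestronglyMeasurable) 1
    filter_upwards with θ
    rw [fourier_apply, Circle.norm_coe]
  have := MemLp.smul (p := ∞) (q := q) (r := q) (f := B)
    (φ := fun θ : Circle2Pi => (fourier n θ : ℂ)) hB hφ (hpqr := ⟨by simp⟩)
  exact this

lemma hasSum_fourierCoeff_mul {A B : Circle2Pi → ℂ} (hA : MemLp A 2 circleMeasure)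
    (hB : MemLp B 2 circleMeasure) (n : ℤ) :
    HasSum (fun m : ℤ => conj (fourierCoeff A m) * fourierCoeff B (m + n))
      (fourierCoeff (fun θ => conj (A θ) * B θ) n) := by
  set B' : Circle2Pi → ℂ := fun θ => fourier (-n) θ * B θ with hB'def
  have hB' : MemLp B' 2 circleMeasure := memLp_fourier_mul hB (-n)
  set a : Lp ℂ 2 circleMeasure := hA.toLp A
  set b : Lp ℂ 2 circleMeasure := hB'.toLp B'
  have key := fourierBasis.hasSum_inner_mul_inner a b
  have ha : ∀ m : ℤ, fourierCoeff (a : Circle2Pi → ℂ) m = fourierCoeff A m :=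
    fun m => fourierCoeff_congr_ae' (hA.coeFn_toLp) m
  have hb : ∀ m : ℤ, fourierCoeff (b : Circle2Pi → ℂ) m = fourierCoeff B (m + n) := by
    intro m
    rw [fourierCoeff_congr_ae' (hB'.coeFn_toLp) m]
    unfold fourierCoeff
    apply integral_congr_ae
    filter_upwards with t
    rw [hB'def]
    simp only [smul_eq_mul]
    rw [← mul_assoc, ← fourier_add, ← neg_add]
  have h1 : ∀ m : ℤ, (inner ℂ a (fourierBasis m) : ℂ) = conj (fourierCoeff A m) := by
    intro m
    rw [← inner_conj_symm, ← fourierBasis.repr_apply_apply, fourierBasis_repr, ha]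
  have h2 : ∀ m : ℤ, (inner ℂ (fourierBasis m) b : ℂ) = fourierCoeff B (m + n) := by
    intro m
    rw [← fourierBasis.repr_apply_apply, fourierBasis_repr, hb]
  have h3 : (inner ℂ a b : ℂ) = fourierCoeff (fun θ => conj (A θ) * B θ) n := by
    rw [MeasureTheory.L2.inner_def]
    unfold fourierCoeff
    apply integral_congr_ae
    filter_upwards [hA.coeFn_toLp, hB'.coeFn_toLp] with t h1 h2
    rw [h1, h2, hB'def]
    simp only [RCLike.inner_apply, smul_eq_mul, RCLike.star_def]
    ring
  rw [← h3]
  refine key.congr_fun fun m => ?_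
  rw [h1, h2]

lemma memLp_conj {A : Circle2Pi → ℂ} {q : ℝ≥0∞} (hA : MemLp A q circleMeasure) :
    MemLp (fun θ => conj (A θ)) q circleMeasure :=
  ⟨Complex.continuous_conj.comp_aestronglyMeasurable hA.1, by
    rw [show (fun θ => conj (A θ)) = (conj A : Circle2Pi → ℂ) from rfl, eLpNorm_conj]
    exact hA.2⟩

lemma memLp_pow {H : Circle2Pi → ℂ} {j : ℕ} (hj : 1 ≤ j)
    (hH : MemLp H (2 * j : ℝ≥0∞) circleMeasure) :
    ∀ k, 1 ≤ k → k ≤ j → MemLp (fun θ => H θ ^ k) 2 circleMeasure := by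
  have hj0 : (j : ℝ≥0∞) ≠ 0 := by exact_mod_cast Nat.cast_ne_zero.2 (by omega)
  have hc0 : (2 * j : ℝ≥0∞) ≠ 0 := by simp [hj0]
  have hct : (2 * j : ℝ≥0∞) ≠ ∞ := by simp [ENNReal.mul_ne_top]
  have main : ∀ k, 1 ≤ k → k ≤ j →
      MemLp (fun θ => H θ ^ k) ((2 * j : ℝ≥0∞) / k) circleMeasure := by
    intro k hk1
    induction k, hk1 using Nat.le_induction with
    | base => intro _; simpa [pow_one] using hH
    | succ k hk1 ih =>
      intro hkj
      have hk : MemLp (fun θ => H θ ^ k) ((2 * j : ℝ≥0∞) / k) circleMeasure :=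
        ih (by omega)
      have hkk : ((k : ℝ≥0∞)) ≠ 0 := by exact_mod_cast Nat.cast_ne_zero.2 (by omega)
      have hkt : ((k : ℝ≥0∞)) ≠ ∞ := by simp
      have hexp : 1 / ((2 * j : ℝ≥0∞) / ((k : ℝ≥0∞) + 1)) =
          1 / (2 * j : ℝ≥0∞) + 1 / ((2 * j : ℝ≥0∞) / k) := by
        rw [one_div, one_div, one_div, ENNReal.inv_div (Or.inr hct) (Or.inr hc0),
          ENNReal.inv_div (Or.inr hct) (Or.inr hc0), ← one_div (2 * (j : ℝ≥0∞)),
          ENNReal.div_add_div_same, add_comm (1 : ℝ≥0∞)]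
      have := MemLp.smul (μ := circleMeasure) (𝕜 := ℂ) (E := ℂ)
        (f := fun θ => H θ ^ k) (φ := H) hk hH (hpqr := ⟨by simpa only [one_div] using hexp.symm⟩)
      have heq : (H • fun θ => H θ ^ k) = fun θ => H θ ^ (k + 1) := by
        funext θ; simp [Pi.smul_apply, smul_eq_mul, pow_succ, mul_comm]
      rw [heq] at this
      exact_mod_cast this
  intro k hk1 hkj
  refine (main k hk1 hkj).mono_exponent ?_
  rw [ENNReal.le_div_iff_mul_le (Or.inl (by exact_mod_cast Nat.cast_ne_zero.2 (by omega)))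
    (Or.inl (by simp))]
  gcongr


lemma fourierCoeff_conj (A : Circle2Pi → ℂ) (m : ℤ) :
    fourierCoeff (fun θ => conj (A θ)) m = conj (fourierCoeff A (-m)) := by
  unfold fourierCoeff
  rw [← integral_conj]
  apply integral_congr_ae
  filter_upwards with t
  simp only [smul_eq_mul, map_mul, neg_neg, ← fourier_neg]

lemma hasSum_re_facts {g : ℤ → ℂ} {S : ℂ} (h : HasSum g S)
    (him : ∀ m, (g m).im = 0) (hre : ∀ m, 0 ≤ (g m).re) (m₀ : ℤ) :
    S.im = 0 ∧ 0 ≤ S.re ∧ (g m₀).re ≤ S.re := by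
  have hR : HasSum (fun m => (g m).re) S.re := by
    have := h.mapL Complex.reCLM
    simpa using this
  have hI : HasSum (fun m => (g m).im) S.im := by
    have := h.mapL Complex.imCLM
    simpa using this
  refine ⟨?_, ?_, ?_⟩
  · simp only [him] at hI
    exact hI.unique hasSum_zero
  · exact hR.nonneg hre
  · exact le_hasSum hR m₀ (fun m _ => hre m)

lemma pow_fourierCoeff {H : Circle2Pi → ℂ}
    (hHpos : ∀ n : ℤ, (fourierCoeff H n).im = 0 ∧ 0 ≤ (fourierCoeff H n).re)
    {j : ℕ} (hj : 1 ≤ j) (hH : MemLp H (2 * j : ℝ≥0∞) circleMeasure) :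
    ∀ k, 1 ≤ k → k ≤ j →
      (∀ m : ℤ, (fourierCoeff (fun θ => H θ ^ k) m).im = 0 ∧
        0 ≤ (fourierCoeff (fun θ => H θ ^ k) m).re) ∧
      (∀ n : ℤ, (fourierCoeff H n).re ^ k ≤
        (fourierCoeff (fun θ => H θ ^ k) ((k : ℤ) * n)).re) := by
  intro k hk1
  induction k, hk1 using Nat.le_induction with
  | base =>
    intro _
    refine ⟨fun m => by simpa [pow_one] using hHpos m, fun n => by simp [pow_one]⟩
  | succ k hk1 ih =>
    intro hkj
    obtain ⟨ihpos, ihlow⟩ := ih (by omega)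
    have hH2 : MemLp H 2 circleMeasure := by
      simpa [pow_one] using memLp_pow hj hH 1 le_rfl hj
    have hconjH : MemLp (fun θ => conj (H θ)) 2 circleMeasure := memLp_conj hH2
    have hHk : MemLp (fun θ => H θ ^ k) 2 circleMeasure := memLp_pow hj hH k hk1 (by omega)
    set G : ℤ → ℂ := fourierCoeff (fun θ => H θ ^ k) with hG
    have key : ∀ n : ℤ, HasSum
        (fun m : ℤ => fourierCoeff H (-m) * G (m + n))
        (fourierCoeff (fun θ => H θ ^ (k + 1)) n) := by
      intro n
      have h := hasSum_fourierCoeff_mul hconjH hHk n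
      have hfun : fourierCoeff (fun θ => conj (conj (H θ)) * H θ ^ k) n
          = fourierCoeff (fun θ => H θ ^ (k + 1)) n := by
        apply fourierCoeff_congr_ae'
        filter_upwards with θ
        rw [Complex.conj_conj, ← pow_succ']
      rw [hfun] at h
      refine h.congr_fun fun m => ?_
      rw [fourierCoeff_conj, Complex.conj_conj]
    have hterm_im : ∀ n m : ℤ, (fourierCoeff H (-m) * G (m + n)).im = 0 := by
      intro n m
      rw [Complex.mul_im, (hHpos (-m)).1, (ihpos (m + n)).1]
      ring
    have hterm_re : ∀ n m : ℤ, (fourierCoeff H (-m) * G (m + n)).re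
        = (fourierCoeff H (-m)).re * (G (m + n)).re := by
      intro n m
      rw [Complex.mul_re, (hHpos (-m)).1, (ihpos (m + n)).1]
      ring
    have hterm_nonneg : ∀ n m : ℤ, 0 ≤ (fourierCoeff H (-m) * G (m + n)).re := by
      intro n m
      rw [hterm_re]
      exact mul_nonneg (hHpos (-m)).2 (ihpos (m + n)).2
    constructor
    · intro m
      obtain ⟨h1, h2, _⟩ := hasSum_re_facts (key m) (hterm_im m) (hterm_nonneg m) 0
      exact ⟨h1, h2⟩
    · intro n
      obtain ⟨_, _, h3⟩ := hasSum_re_facts (key (((k : ℤ) + 1) * n))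
        (hterm_im _) (hterm_nonneg _) (-n)
      have hidx : -n + ((k : ℤ) + 1) * n = (k : ℤ) * n := by ring
      calc (fourierCoeff H n).re ^ (k + 1)
          = (fourierCoeff H n).re * (fourierCoeff H n).re ^ k := by ring
        _ ≤ (fourierCoeff H n).re * (G ((k : ℤ) * n)).re :=
            mul_le_mul_of_nonneg_left (ihlow n) (hHpos n).2
        _ = (fourierCoeff H (- -n) * G (-n + ((k : ℤ) + 1) * n)).re := by
            rw [hterm_re, neg_neg, hidx]
        _ ≤ _ := h3
      -- note: target index cast

lemma J_coeff_lower {H : Circle2Pi → ℂ}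
    (hHpos : ∀ n : ℤ, (fourierCoeff H n).im = 0 ∧ 0 ≤ (fourierCoeff H n).re)
    {j : ℕ} (hj : 1 < j) (hH : MemLp H (2 * j : ℝ≥0∞) circleMeasure) (n : ℤ) :
    (fourierCoeff H n).re ^ (2 * j - 1) ≤
      (fourierCoeff (fun θ => conj (H θ) ^ (j - 1) * H θ ^ j) n).re := by
  have hj1 : 1 ≤ j := le_of_lt hj
  have hK : MemLp (fun θ => H θ ^ (j - 1)) 2 circleMeasure :=
    memLp_pow hj1 hH (j - 1) (by omega) (by omega)
  have hG : MemLp (fun θ => H θ ^ j) 2 circleMeasure := memLp_pow hj1 hH j hj1 le_rfl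
  obtain ⟨hKpos, hKlow⟩ := pow_fourierCoeff hHpos hj1 hH (j - 1) (by omega) (by omega)
  obtain ⟨hGpos, hGlow⟩ := pow_fourierCoeff hHpos hj1 hH j hj1 le_rfl
  set K : ℤ → ℂ := fourierCoeff (fun θ => H θ ^ (j - 1)) with hKdef
  set G : ℤ → ℂ := fourierCoeff (fun θ => H θ ^ j) with hGdef
  have key : HasSum (fun m : ℤ => conj (K m) * G (m + n))
      (fourierCoeff (fun θ => conj (H θ) ^ (j - 1) * H θ ^ j) n) := by
    have h := hasSum_fourierCoeff_mul hK hG n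
    have hfun : fourierCoeff (fun θ => conj (H θ ^ (j - 1)) * H θ ^ j) n
        = fourierCoeff (fun θ => conj (H θ) ^ (j - 1) * H θ ^ j) n := by
      apply fourierCoeff_congr_ae'
      filter_upwards with θ
      rw [map_pow]
    rw [hfun] at h
    exact h
  have hconjK : ∀ m : ℤ, conj (K m) = K m := by
    intro m
    exact Complex.conj_eq_iff_im.2 (hKpos m).1
  have hterm_im : ∀ m : ℤ, (conj (K m) * G (m + n)).im = 0 := by
    intro m
    rw [hconjK, Complex.mul_im, (hKpos m).1, (hGpos (m + n)).1]
    ring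
  have hterm_re : ∀ m : ℤ, (conj (K m) * G (m + n)).re = (K m).re * (G (m + n)).re := by
    intro m
    rw [hconjK, Complex.mul_re, (hKpos m).1, (hGpos (m + n)).1]
    ring
  have hterm_nonneg : ∀ m : ℤ, 0 ≤ (conj (K m) * G (m + n)).re := by
    intro m
    rw [hterm_re]
    exact mul_nonneg (hKpos m).2 (hGpos (m + n)).2
  obtain ⟨_, _, h3⟩ := hasSum_re_facts key hterm_im hterm_nonneg (((j : ℤ) - 1) * n)
  have hidx : ((j : ℤ) - 1) * n + n = (j : ℤ) * n := by ring
  have hcast : (((j - 1 : ℕ) : ℤ)) = (j : ℤ) - 1 := by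
    push_cast [Nat.cast_sub hj1]
    ring
  calc (fourierCoeff H n).re ^ (2 * j - 1)
      = (fourierCoeff H n).re ^ (j - 1) * (fourierCoeff H n).re ^ j := by
        rw [← pow_add]
        congr 1
        omega
    _ ≤ (K (((j - 1 : ℕ) : ℤ) * n)).re * (G ((j : ℤ) * n)).re := by
        apply mul_le_mul (hKlow n) (hGlow n) (pow_nonneg (hHpos n).2 _) (hKpos _).2
    _ = (conj (K (((j : ℤ) - 1) * n)) * G (((j : ℤ) - 1) * n + n)).re := by
        rw [hterm_re, hidx, hcast]
    _ ≤ _ := h3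

/-- conditions (1)–(3) of the definition of a `p`-conjugate imply
condition (4): `Ĥ(n) = 0` wherever `f̂(n) = 0`. -/
theorem pConjugate_support_condition (j : ℕ) (hj : 1 < j)
    (p : ℝ≥0∞) (hp : p = (2 * j : ℝ≥0∞) / (2 * j - 1))
    (f : Circle2Pi → ℂ) (hf : MemLp f p circleMeasure)
    (H : Circle2Pi → ℂ) (hH : MemLp H (2 * j : ℝ≥0∞) circleMeasure)
    (hHpos : ∀ n : ℤ, (fourierCoeff H n).im = 0 ∧ 0 ≤ (fourierCoeff H n).re)
    (J : Circle2Pi → ℂ)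
    (hJ : J = fun θ => (starRingEnd ℂ (H θ)) ^ (j - 1) * (H θ) ^ j)
    (hJmaj : IsMajorant J f)
    (hslack : ∀ n : ℤ, ‖fourierCoeff f n‖ < (fourierCoeff J n).re →
      fourierCoeff H n = 0) :
    ∀ n : ℤ, fourierCoeff f n = 0 → fourierCoeff H n = 0 := by
  intro n hfn
  by_contra hne
  have hre : 0 < (fourierCoeff H n).re := by
    rcases lt_or_eq_of_le (hHpos n).2 with h | h
    · exact h
    · exact absurd (Complex.ext h.symm (hHpos n).1) hne
  have hlow := J_coeff_lower hHpos hj hH n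
  rw [← hJ] at hlow
  have hpos : 0 < (fourierCoeff J n).re :=
    lt_of_lt_of_le (pow_pos hre _) hlow
  have : ‖fourierCoeff f n‖ < (fourierCoeff J n).re := by
    rw [hfn]
    simpa using hpos
  exact absurd (hslack n this) hne
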